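/- Let n be a positive integer, b₁ > 0, b₀ a real with b₁ + b₀ > 0, c* > 0, d* > 0, M_Ω > 0, β > 0, and let (d_j)_{j≥1} be a sequence of positive integers with d_j ≤ c*·j^{d*} for all j. Then there exists a constant C > 0, depending only на n, b₀, b₁, c*, d*, |ω|, M_Ω and β, with the following property. Let ω ∈ ℝⁿ, let Ω_{j,ι} (j ≥ 1, 1 ≤ ι ≤ d_j) be real numbers with |Ω_{j,ι} − (b₁·j + b₀)| ≤ M_Ω/j^β for all (j,ι), let N ≥ 1 be an integer, 0 < κ < 1, and let k ∈ ℤⁿ with |k| ≤ N. Let A = (A_i^j)_{i,j≥1} be an infinite block matrix with blocks A_i^j ∈ M_{d_i×d_j}(ℂ) and sup_{i,j} ‖A_i^j‖ < ∞, and suppose that for all (i,ι₁), (j,ι₂) with |k| + |i−j| ≠ 0 one has |⟨k,ω⟩ − Ω_{i,ι₁} + Ω_{j,ι₂}| ≥ κ·(1+|i−j|). Define the block matrix B(k) entrywise by B_{(i,ι₁)}^{(j,ι₂)}(k) = A_{(i,ι₁)}^{(j,ι₂)} / ( ⟨k,ω⟩ − Ω_{i,ι₁} + Ω_{j,ι₂}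 ) when |k| + |i−j| ≠ 0, and B_{(j,ι₁)}^{(j,ι₂)}(0) = 0. Then for all i, j ≥ 1, ‖B_i^j(k)‖ ≤ C · N^{d*/2} / ( κ^{d*/(2β)+1} · (1+|i−j|) ) · ‖A_i^j‖. -/

import Mathlib

open scoped Matrix.Norms.L2Operator

open Matrix in
lemma aux_opNorm_le_frobenius {m n : Type*} [Fintype m] [Fintype n] [DecidableEq n] (M : Matrix m n ℂ) :
    ‖M‖ ≤ Real.sqrt (∑ i, ∑ j, ‖M i j‖ ^ 2) := by
  rw [Matrix.l2_opNorm_def]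
  apply ContinuousLinearMap.opNorm_le_bound _ (Real.sqrt_nonneg _)
  intro x
  have hx : ‖x‖ = Real.sqrt (∑ j, ‖x j‖ ^ 2) := by
    rw [EuclideanSpace.norm_eq]
  have happ : ((Matrix.toEuclideanLin.trans LinearMap.toContinuousLinearMap) M) x
      = (WithLp.equiv 2 (m → ℂ)).symm (M *ᵥ (WithLp.equiv 2 (n → ℂ)) x) := rfl
  rw [happ]
  have hnorm : ‖(WithLp.equiv 2 (m → ℂ)).symm (M *ᵥ (WithLp.equiv 2 (n → ℂ)) x)‖
      = Real.sqrt (∑ i, ‖(M *ᵥ x) i‖ ^ 2) := by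
    rw [EuclideanSpace.norm_eq]
    simp [sq_abs]
  rw [hnorm, hx, ← Real.sqrt_mul (by positivity)]
  apply Real.sqrt_le_sqrt
  rw [Finset.sum_mul]
  apply Finset.sum_le_sum
  intro i _
  calc ‖(M *ᵥ x) i‖ ^ 2 ≤ (∑ j, ‖M i j‖ * ‖x j‖) ^ 2 := by
        apply pow_le_pow_left₀ (norm_nonneg _)
        calc ‖(M *ᵥ x) i‖ = ‖∑ j, M i j * x j‖ := rfl
          _ ≤ ∑ j, ‖M i j * x j‖ := norm_sum_le _ _
          _ = ∑ j, ‖M i j‖ * ‖x j‖ := by simp [norm_mul]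
    _ ≤ (∑ j, ‖M i j‖ ^ 2) * ∑ j, ‖x j‖ ^ 2 :=
        Finset.sum_mul_sq_le_sq_mul_sq _ _ _

open Matrix in
lemma aux_frobenius_le_card_col {m n : Type*} [Fintype m] [Fintype n] [DecidableEq n]
    (M : Matrix m n ℂ) :
    ∑ j, ∑ i, ‖M i j‖ ^ 2 ≤ (Fintype.card n : ℝ) * ‖M‖ ^ 2 := by
  have hcol : ∀ j, ∑ i, ‖M i j‖ ^ 2 ≤ ‖M‖ ^ 2 := by
    intro j
    have h := M.l2_opNorm_mulVec (EuclideanSpace.single j (1 : ℂ))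
    have hmv : M *ᵥ (EuclideanSpace.single j (1 : ℂ)) = fun i => M i j := by
      have : ((EuclideanSpace.single j (1 : ℂ)) : n → ℂ) = Pi.single j 1 := rfl
      rw [show (EuclideanSpace.single j (1:ℂ) : n → ℂ) = Pi.single j 1 from rfl,
        Matrix.mulVec_single]
      simp
      rfl
    rw [hmv, EuclideanSpace.norm_single] at h
    have hn : ‖(EuclideanSpace.equiv m ℂ).symm (fun i => M i j)‖
        = Real.sqrt (∑ i, ‖M i j‖ ^ 2) := by
      rw [EuclideanSpace.norm_eq]
      rfl
    rw [hn, norm_one, mul_one] at h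
    calc ∑ i, ‖M i j‖ ^ 2 = Real.sqrt (∑ i, ‖M i j‖ ^ 2) ^ 2 := by
          rw [Real.sq_sqrt (by positivity)]
      _ ≤ ‖M‖ ^ 2 := pow_le_pow_left₀ (Real.sqrt_nonneg _) h 2
  calc ∑ j, ∑ i, ‖M i j‖ ^ 2 ≤ ∑ _j : n, ‖M‖ ^ 2 := Finset.sum_le_sum fun j _ => hcol j
    _ = (Fintype.card n : ℝ) * ‖M‖ ^ 2 := by simp [Finset.sum_const, nsmul_eq_mul]

open Matrix in
lemma aux_opNorm_diagonal_le {m : Type*} [Fintype m] [DecidableEq m] (v : m → ℂ) (c : ℝ)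
    (hc : 0 ≤ c) (h : ∀ i, ‖v i‖ ≤ c) : ‖Matrix.diagonal v‖ ≤ c := by
  rw [Matrix.l2_opNorm_def]
  apply ContinuousLinearMap.opNorm_le_bound _ hc
  intro x
  have happ : ((Matrix.toEuclideanLin.trans LinearMap.toContinuousLinearMap) (diagonal v)) x
      = (WithLp.equiv 2 (m → ℂ)).symm (diagonal v *ᵥ (WithLp.equiv 2 (m → ℂ)) x) := rfl
  rw [happ]
  have h1 : ‖(WithLp.equiv 2 (m → ℂ)).symm (diagonal v *ᵥ (WithLp.equiv 2 (m → ℂ)) x)‖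
      = Real.sqrt (∑ i, ‖v i * x i‖ ^ 2) := by
    rw [EuclideanSpace.norm_eq]
    congr 1
    apply Finset.sum_congr rfl
    intro i _
    have : (WithLp.equiv 2 (m → ℂ)).symm (diagonal v *ᵥ (WithLp.equiv 2 (m → ℂ)) x) i
        = (diagonal v *ᵥ (x : m → ℂ)) i := rfl
    rw [this, Matrix.mulVec_diagonal]
  rw [h1, EuclideanSpace.norm_eq x]
  rw [← Real.sqrt_sq hc, ← Real.sqrt_mul (by positivity)]
  apply Real.sqrt_le_sqrt
  rw [Finset.mul_sum]
  apply Finset.sum_le_sum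
  intro i _
  rw [norm_mul, mul_pow]
  gcongr
  exact h i

open Matrix in
lemma aux_frobenius_le_card_row {m n : Type*} [Fintype m] [Fintype n] [DecidableEq m]
    [DecidableEq n] (M : Matrix m n ℂ) :
    ∑ i, ∑ j, ‖M i j‖ ^ 2 ≤ (Fintype.card m : ℝ) * ‖M‖ ^ 2 := by
  have h := aux_frobenius_le_card_col Mᴴ
  rw [Matrix.l2_opNorm_conjTranspose] at h
  simpa [Matrix.conjTranspose_apply] using h

open Matrix in
lemma aux_frobenius_le_card_col' {m n : Type*} [Fintype m] [Fintype n] [DecidableEq n]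
    (M : Matrix m n ℂ) :
    ∑ i, ∑ j, ‖M i j‖ ^ 2 ≤ (Fintype.card n : ℝ) * ‖M‖ ^ 2 := by
  rw [Finset.sum_comm]
  exact aux_frobenius_le_card_col M

set_option maxHeartbeats 1600000

/-- (Small–divisor lemma.)  Let `n ≥ 1`, `b₁ > 0`, `b₁ + b₀ > 0`, `c* > 0`, `d* > 0`,
`M_Ω > 0`, `β > 0`, and let `(d_j)` be positive integers with `d_j ≤ c*·j^{d*}`.  Then there
is a constant `C > 0` (depending only on `n, b₀, b₁, c*, d*, M_Ω, β` and a bound `M_ω` on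
`|ω|`) such that: for every `ω ∈ ℝⁿ` with `|ω| ≤ M_ω`, every family `Ω_{j,ι}` with
`|Ω_{j,ι} − (b₁j+b₀)| ≤ M_Ω/j^β`, every `N ≥ 1`, `0 < κ < 1`, `k ∈ ℤⁿ` with `|k|₁ ≤ N`, and
every block matrix `A` (blocks `A_i^j ∈ M_{d_i×d_j}(ℂ)` with the `ℓ²`-operator norm) with
`sup_{i,j}‖A_i^j‖ < ∞`, if the small-divisor estimate
`|⟨k,ω⟩ − Ω_{i,ι₁} + Ω_{j,ι₂}| ≥ κ(1+|i−j|)` holds whenever `|k|₁ + |i−j| ≠ 0`, then the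
block matrix `B(k)` with entries `B_{(i,ι₁)}^{(j,ι₂)} = A_{(i,ι₁)}^{(j,ι₂)} /
(⟨k,ω⟩ − Ω_{i,ι₁} + Ω_{j,ι₂})` for `|k|₁+|i−j| ≠ 0` and `B_{(j,ι₁)}^{(j,ι₂)}(0) = 0`
satisfies `‖B_i^j‖ ≤ C·N^{d*/2}/(κ^{d*/(2β)+1}(1+|i−j|))·‖A_i^j‖` for all `i, j`. -/
theorem small_divisor_block_bound (n : ℕ) (hn : 0 < n)
    (b₁ b₀ cstar dstar MΩ β Mω : ℝ)
    (hb₁ : 0 < b₁) (hb₀ : 0 < b₁ + b₀) (hc : 0 < cstar) (hd : 0 < dstar)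
    (hMΩ : 0 < MΩ) (hβ : 0 < β) (hMω : 0 ≤ Mω)
    (d : ℕ+ → ℕ+) (hdj : ∀ j : ℕ+, (d j : ℝ) ≤ cstar * (j : ℝ) ^ dstar) :
    ∃ C > (0 : ℝ),
      ∀ ω : Fin n → ℝ, ‖ω‖ ≤ Mω →
      ∀ Ω : ∀ j : ℕ+, Fin (d j) → ℝ,
        (∀ (j : ℕ+) (ι : Fin (d j)), |Ω j ι - (b₁ * (j : ℝ) + b₀)| ≤ MΩ / (j : ℝ) ^ β) →
      ∀ N : ℕ, 1 ≤ N → ∀ κ : ℝ, 0 < κ → κ < 1 →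
      ∀ k : Fin n → ℤ, (∑ b, |(k b : ℝ)|) ≤ N →
      ∀ A : ∀ i j : ℕ+, Matrix (Fin (d i)) (Fin (d j)) ℂ,
        (∃ MA : ℝ, ∀ i j : ℕ+, ‖A i j‖ ≤ MA) →
        (∀ (i j : ℕ+) (ι₁ : Fin (d i)) (ι₂ : Fin (d j)),
          (∑ b, |(k b : ℝ)|) + |(i : ℝ) - (j : ℝ)| ≠ 0 →
          κ * (1 + |(i : ℝ) - (j : ℝ)|) ≤
            |(∑ b, (k b : ℝ) * ω b) - Ω i ι₁ + Ω j ι₂|) →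
      ∀ i j : ℕ+,
        ‖(Matrix.of fun (ι₁ : Fin (d i)) (ι₂ : Fin (d j)) =>
            if (∑ b, |(k b : ℝ)|) + |(i : ℝ) - (j : ℝ)| = 0 then (0 : ℂ)
            else A i j ι₁ ι₂ /
              (((∑ b, (k b : ℝ) * ω b) - Ω i ι₁ + Ω j ι₂ : ℝ) : ℂ))‖ ≤
          C * (N : ℝ) ^ (dstar / 2) /
            (κ ^ (dstar / (2 * β) + 1) * (1 + |(i : ℝ) - (j : ℝ)|)) * ‖A i j‖ := by
  classical
  set C : ℝ := 2 + Real.sqrt cstar * (8 * MΩ) ^ (dstar / (2 * β)) with hC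
  have hC0 : 0 < C := by
    have : 0 < (8 * MΩ) ^ (dstar / (2 * β)) := Real.rpow_pos_of_pos (by linarith) _
    have := Real.sqrt_pos.mpr hc
    positivity
  refine ⟨C, hC0, ?_⟩
  intro ω hω Ω hΩ N hN κ hκ0 hκ1 k hk A hA hsd i j
  set t : ℝ := |(i : ℝ) - (j : ℝ)| with ht
  have ht0 : 0 ≤ t := abs_nonneg _
  have h1t : (1 : ℝ) ≤ 1 + t := by linarith
  set S : ℝ := ∑ b, |(k b : ℝ)| with hS
  set kω : ℝ := ∑ b, (k b : ℝ) * ω b with hkω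
  set B : Matrix (Fin (d i)) (Fin (d j)) ℂ :=
    Matrix.of fun (ι₁ : Fin (d i)) (ι₂ : Fin (d j)) =>
      if S + t = 0 then (0 : ℂ)
      else A i j ι₁ ι₂ / ((kω - Ω i ι₁ + Ω j ι₂ : ℝ) : ℂ) with hB
  set Q : ℝ := κ ^ (dstar / (2 * β)) with hQ
  have hQ0 : 0 < Q := Real.rpow_pos_of_pos hκ0 _
  have hQ1 : Q ≤ 1 := Real.rpow_le_one hκ0.le hκ1.le (by positivity)
  have hκe : κ ^ (dstar / (2 * β) + 1) = Q * κ := by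
    rw [Real.rpow_add hκ0, Real.rpow_one]
  -- main bound without the N factor
  have key : ‖B‖ ≤ C / (Q * κ * (1 + t)) * ‖A i j‖ := by
    by_cases hcond : S + t = 0
    · have hB0 : B = 0 := by
        ext ι₁ ι₂
        simp [hB, hcond]
      rw [hB0, norm_zero]
      positivity
    · have hκt : 0 < κ * (1 + t) := by positivity
      have hsd' : ∀ (ι₁ : Fin (d i)) (ι₂ : Fin (d j)),
          κ * (1 + t) ≤ |kω - Ω i ι₁ + Ω j ι₂| := fun ι₁ ι₂ => hsd i j ι₁ ι₂ hcond
      have hδne : ∀ (ι₁ : Fin (d i)) (ι₂ : Fin (d j)), (kω - Ω i ι₁ + Ω j ι₂) ≠ 0 := by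
        intro ι₁ ι₂ h0
        have := hsd' ι₁ ι₂
        rw [h0, abs_zero] at this
        linarith
      have hBent : ∀ ι₁ ι₂, B ι₁ ι₂ = A i j ι₁ ι₂ / ((kω - Ω i ι₁ + Ω j ι₂ : ℝ) : ℂ) := by
        intro ι₁ ι₂; simp [hB, hcond]
      have hBnorm : ∀ ι₁ ι₂, ‖B ι₁ ι₂‖ ≤ ‖A i j ι₁ ι₂‖ / (κ * (1 + t)) := by
        intro ι₁ ι₂
        rw [hBent, norm_div, Complex.norm_real, Real.norm_eq_abs]
        gcongr
        exact hsd' ι₁ ι₂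
      obtain ⟨m0, hm0i, hm0j, hm0d⟩ :
          ∃ m0 : ℕ+, (m0 : ℝ) ≤ (i : ℝ) ∧ (m0 : ℝ) ≤ (j : ℝ) ∧
            (((d m0 : ℕ) : ℝ) = ((d i : ℕ) : ℝ) ∨ ((d m0 : ℕ) : ℝ) = ((d j : ℕ) : ℝ)) := by
        rcases le_total i j with h | h
        · exact ⟨i, le_rfl, by exact_mod_cast h, Or.inl rfl⟩
        · exact ⟨j, by exact_mod_cast h, le_rfl, Or.inr rfl⟩
      have hm01 : (1 : ℝ) ≤ (m0 : ℝ) := by exact_mod_cast m0.one_le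
      have hm0β : 0 < (m0 : ℝ) ^ β := Real.rpow_pos_of_pos (by linarith) _
      have hden : 0 < Q * κ * (1 + t) := by positivity
      by_cases hbig : 8 * MΩ ≤ κ * (m0 : ℝ) ^ β
      · -- large indices: diagonal perturbation argument
        have tri : ∀ x y z : ℝ, |x - y + z| ≤ |x| + |y| + |z| := by
          intro x y z
          calc |x - y + z| ≤ |x - y| + |z| := abs_add_le _ _
            _ ≤ |x| + |y| + |z| := by
                have h1 : |x - y| ≤ |x| + |y| := abs_sub x y
                linarith
        have hMκ : MΩ / (m0 : ℝ) ^ β ≤ κ / 8 := by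
          rw [div_le_div_iff₀ hm0β (by norm_num)]
          nlinarith
        have hai : ∀ ι₁ : Fin (d i), |Ω i ι₁ - (b₁ * (i : ℝ) + b₀)| ≤ κ / 8 := by
          intro ι₁
          calc |Ω i ι₁ - (b₁ * (i : ℝ) + b₀)| ≤ MΩ / (i : ℝ) ^ β := hΩ i ι₁
            _ ≤ MΩ / (m0 : ℝ) ^ β := by
                gcongr
            _ ≤ κ / 8 := hMκ
        have haj : ∀ ι₂ : Fin (d j), |Ω j ι₂ - (b₁ * (j : ℝ) + b₀)| ≤ κ / 8 := by
          intro ι₂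
          calc |Ω j ι₂ - (b₁ * (j : ℝ) + b₀)| ≤ MΩ / (j : ℝ) ^ β := hΩ j ι₂
            _ ≤ MΩ / (m0 : ℝ) ^ β := by
                gcongr
            _ ≤ κ / 8 := hMκ
        have ι₁0 : Fin (d i) := ⟨0, (d i).2⟩
        have ι₂0 : Fin (d j) := ⟨0, (d j).2⟩
        have hδ₀ : κ * (1 + t) - κ / 4 ≤ |kω - b₁ * (i : ℝ) + b₁ * (j : ℝ)| := by
          have h1 := hsd' ι₁0 ι₂0
          have h2 := hai ι₁0
          have h3 := haj ι₂0
          have heq : kω - Ω i ι₁0 + Ω j ι₂0 =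
              (kω - b₁ * (i : ℝ) + b₁ * (j : ℝ)) - (Ω i ι₁0 - (b₁ * (i : ℝ) + b₀))
                + (Ω j ι₂0 - (b₁ * (j : ℝ) + b₀)) := by ring
          rw [heq] at h1
          have h4 := tri (kω - b₁ * (i : ℝ) + b₁ * (j : ℝ))
            (Ω i ι₁0 - (b₁ * (i : ℝ) + b₀)) (Ω j ι₂0 - (b₁ * (j : ℝ) + b₀))
          linarith
        set Da : Matrix (Fin (d i)) (Fin (d i)) ℂ :=
          Matrix.diagonal (fun ι₁ => ((Ω i ι₁ - (b₁ * (i : ℝ) + b₀) : ℝ) : ℂ)) with hDa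
        set Db : Matrix (Fin (d j)) (Fin (d j)) ℂ :=
          Matrix.diagonal (fun ι₂ => ((Ω j ι₂ - (b₁ * (j : ℝ) + b₀) : ℝ) : ℂ)) with hDb
        have hid : ((kω - b₁ * (i : ℝ) + b₁ * (j : ℝ) : ℝ) : ℂ) • B
            = A i j + Da * B - B * Db := by
          ext ι₁ ι₂
          have hδC : ((kω - Ω i ι₁ + Ω j ι₂ : ℝ) : ℂ) ≠ 0 := by
            exact_mod_cast hδne ι₁ ι₂
          simp only [Matrix.smul_apply, Matrix.add_apply, Matrix.sub_apply, hDa, hDb,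
            Matrix.mul_diagonal, Matrix.diagonal_mul, hBent, smul_eq_mul]
          push_cast
          push_cast at hδC
          field_simp
          ring
        have hDaN : ‖Da‖ ≤ κ / 8 := by
          apply aux_opNorm_diagonal_le _ _ (by positivity)
          intro ι₁
          rw [Complex.norm_real, Real.norm_eq_abs]
          exact hai ι₁
        have hDbN : ‖Db‖ ≤ κ / 8 := by
          apply aux_opNorm_diagonal_le _ _ (by positivity)
          intro ι₂
          rw [Complex.norm_real, Real.norm_eq_abs]
          exact haj ι₂
        have hnorm1 : |kω - b₁ * (i : ℝ) + b₁ * (j : ℝ)| * ‖B‖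
            ≤ ‖A i j‖ + κ / 8 * ‖B‖ + κ / 8 * ‖B‖ := by
          calc |kω - b₁ * (i : ℝ) + b₁ * (j : ℝ)| * ‖B‖
              = ‖((kω - b₁ * (i : ℝ) + b₁ * (j : ℝ) : ℝ) : ℂ) • B‖ := by
                rw [norm_smul, Complex.norm_real, Real.norm_eq_abs]
            _ = ‖A i j + Da * B - B * Db‖ := by rw [hid]
            _ ≤ ‖A i j + Da * B‖ + ‖B * Db‖ := norm_sub_le _ _
            _ ≤ ‖A i j‖ + ‖Da * B‖ + ‖B * Db‖ := by
                have := norm_add_le (A i j) (Da * B)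
                linarith
            _ ≤ ‖A i j‖ + κ / 8 * ‖B‖ + κ / 8 * ‖B‖ := by
                have h1 : ‖Da * B‖ ≤ κ / 8 * ‖B‖ :=
                  (Matrix.l2_opNorm_mul _ _).trans
                    (mul_le_mul_of_nonneg_right hDaN (norm_nonneg _))
                have h2 : ‖B * Db‖ ≤ κ / 8 * ‖B‖ := by
                  refine (Matrix.l2_opNorm_mul _ _).trans ?_
                  calc ‖B‖ * ‖Db‖ ≤ ‖B‖ * (κ / 8) :=
                        mul_le_mul_of_nonneg_left hDbN (norm_nonneg _)
                    _ = κ / 8 * ‖B‖ := by ring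
                linarith
        have hfinal : κ * (1 + t) / 2 * ‖B‖ ≤ ‖A i j‖ := by
          nlinarith [mul_le_mul_of_nonneg_right hδ₀ (norm_nonneg B), norm_nonneg B,
            mul_nonneg (mul_nonneg hκ0.le ht0) (norm_nonneg B)]
        rw [div_mul_eq_mul_div, le_div_iff₀ hden]
        have hQle : Q * κ * (1 + t) ≤ κ * (1 + t) := by nlinarith
        calc ‖B‖ * (Q * κ * (1 + t)) ≤ ‖B‖ * (κ * (1 + t)) :=
              mul_le_mul_of_nonneg_left hQle (norm_nonneg _)
          _ ≤ 2 * ‖A i j‖ := by nlinarith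
          _ ≤ C * ‖A i j‖ := by
              apply mul_le_mul_of_nonneg_right _ (norm_nonneg _)
              rw [hC]
              nlinarith [Real.sqrt_nonneg cstar,
                (Real.rpow_pos_of_pos (show (0:ℝ) < 8 * MΩ by linarith) (dstar / (2 * β))).le]
      · -- small indices: Frobenius norm argument
        push_neg at hbig
        have hQ2 : Q ^ 2 = κ ^ (dstar / β) := by
          rw [hQ, ← Real.rpow_natCast (κ ^ (dstar / (2 * β))) 2, ← Real.rpow_mul hκ0.le]
          congr 1
          field_simp
          ring
        have hCsq : cstar * (8 * MΩ) ^ (dstar / β) ≤ C ^ 2 := by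
          have hCge : Real.sqrt cstar * (8 * MΩ) ^ (dstar / (2 * β)) ≤ C := by
            rw [hC]; norm_num
          have h8 : (Real.sqrt cstar * (8 * MΩ) ^ (dstar / (2 * β))) ^ 2
              = cstar * (8 * MΩ) ^ (dstar / β) := by
            rw [mul_pow, Real.sq_sqrt hc.le,
              ← Real.rpow_natCast ((8 * MΩ) ^ (dstar / (2 * β))) 2,
              ← Real.rpow_mul (by linarith)]
            congr 1
            field_simp
            ring
          calc cstar * (8 * MΩ) ^ (dstar / β)
              = (Real.sqrt cstar * (8 * MΩ) ^ (dstar / (2 * β))) ^ 2 := h8.symm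
            _ ≤ C ^ 2 := by
                apply pow_le_pow_left₀ (by positivity) hCge
        have hm0d' : ((d m0 : ℕ) : ℝ) ≤ cstar * (8 * MΩ) ^ (dstar / β) / Q ^ 2 := by
          have h1 : (m0 : ℝ) ^ β ≤ 8 * MΩ / κ := by
            rw [le_div_iff₀ hκ0]; nlinarith
          have h2 : (m0 : ℝ) ^ dstar ≤ (8 * MΩ / κ) ^ (dstar / β) := by
            have heq : (m0 : ℝ) ^ dstar = ((m0 : ℝ) ^ β) ^ (dstar / β) := by
              rw [← Real.rpow_mul (by linarith)]
              congr 1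
              field_simp
            rw [heq]
            exact Real.rpow_le_rpow hm0β.le h1 (by positivity)
          have h3 : (8 * MΩ / κ) ^ (dstar / β)
              = (8 * MΩ) ^ (dstar / β) / κ ^ (dstar / β) :=
            Real.div_rpow (by linarith) hκ0.le _
          calc ((d m0 : ℕ) : ℝ) ≤ cstar * (m0 : ℝ) ^ dstar := hdj m0
            _ ≤ cstar * ((8 * MΩ) ^ (dstar / β) / κ ^ (dstar / β)) := by
                rw [← h3]
                exact mul_le_mul_of_nonneg_left h2 hc.le
            _ = cstar * (8 * MΩ) ^ (dstar / β) / Q ^ 2 := by rw [hQ2]; ring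
        have hFA : ∑ ι₁, ∑ ι₂, ‖A i j ι₁ ι₂‖ ^ 2 ≤ ((d m0 : ℕ) : ℝ) * ‖A i j‖ ^ 2 := by
          rcases hm0d with h | h
          · rw [h]
            have := aux_frobenius_le_card_row (A i j)
            simpa using this
          · rw [h]
            have := aux_frobenius_le_card_col' (A i j)
            simpa using this
        have hFB : ∑ ι₁, ∑ ι₂, ‖B ι₁ ι₂‖ ^ 2
            ≤ (∑ ι₁, ∑ ι₂, ‖A i j ι₁ ι₂‖ ^ 2) / (κ * (1 + t)) ^ 2 := by
          rw [Finset.sum_div]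
          apply Finset.sum_le_sum
          intro ι₁ _
          rw [Finset.sum_div]
          apply Finset.sum_le_sum
          intro ι₂ _
          calc ‖B ι₁ ι₂‖ ^ 2 ≤ (‖A i j ι₁ ι₂‖ / (κ * (1 + t))) ^ 2 :=
                pow_le_pow_left₀ (norm_nonneg _) (hBnorm ι₁ ι₂) 2
            _ = ‖A i j ι₁ ι₂‖ ^ 2 / (κ * (1 + t)) ^ 2 := div_pow _ _ 2
        have hBF : ‖B‖ ≤ Real.sqrt (∑ ι₁, ∑ ι₂, ‖B ι₁ ι₂‖ ^ 2) := aux_opNorm_le_frobenius B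
        rw [div_mul_eq_mul_div, le_div_iff₀ hden]
        have hRHS : 0 ≤ C * ‖A i j‖ := by positivity
        apply le_of_pow_le_pow_left₀ (two_ne_zero) hRHS
        have hBsq : ‖B‖ ^ 2 ≤ ∑ ι₁, ∑ ι₂, ‖B ι₁ ι₂‖ ^ 2 := by
          have h0 : (0:ℝ) ≤ ∑ ι₁, ∑ ι₂, ‖B ι₁ ι₂‖ ^ 2 := by positivity
          calc ‖B‖ ^ 2 ≤ Real.sqrt (∑ ι₁, ∑ ι₂, ‖B ι₁ ι₂‖ ^ 2) ^ 2 :=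
                pow_le_pow_left₀ (norm_nonneg _) hBF 2
            _ = ∑ ι₁, ∑ ι₂, ‖B ι₁ ι₂‖ ^ 2 := Real.sq_sqrt h0
        calc (‖B‖ * (Q * κ * (1 + t))) ^ 2
            = ‖B‖ ^ 2 * (Q ^ 2 * (κ * (1 + t)) ^ 2) := by ring
          _ ≤ ((∑ ι₁, ∑ ι₂, ‖A i j ι₁ ι₂‖ ^ 2) / (κ * (1 + t)) ^ 2)
                * (Q ^ 2 * (κ * (1 + t)) ^ 2) := by
              apply mul_le_mul_of_nonneg_right (hBsq.trans hFB) (by positivity)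
          _ = (∑ ι₁, ∑ ι₂, ‖A i j ι₁ ι₂‖ ^ 2) * Q ^ 2 := by
              field_simp
          _ ≤ (((d m0 : ℕ) : ℝ) * ‖A i j‖ ^ 2) * Q ^ 2 := by
              apply mul_le_mul_of_nonneg_right hFA (by positivity)
          _ ≤ ((cstar * (8 * MΩ) ^ (dstar / β) / Q ^ 2) * ‖A i j‖ ^ 2) * Q ^ 2 := by
              apply mul_le_mul_of_nonneg_right _ (by positivity)
              apply mul_le_mul_of_nonneg_right hm0d' (by positivity)
          _ = cstar * (8 * MΩ) ^ (dstar / β) * ‖A i j‖ ^ 2 := by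
              field_simp
          _ ≤ C ^ 2 * ‖A i j‖ ^ 2 := by
              apply mul_le_mul_of_nonneg_right hCsq (by positivity)
          _ = (C * ‖A i j‖) ^ 2 := by ring

  -- conclude
  have hNd : (1 : ℝ) ≤ (N : ℝ) ^ (dstar / 2) := by
    apply Real.one_le_rpow (by exact_mod_cast hN) (by positivity)
  have hden : 0 < Q * κ * (1 + t) := by positivity
  calc ‖B‖ ≤ C / (Q * κ * (1 + t)) * ‖A i j‖ := key
    _ ≤ C * (N : ℝ) ^ (dstar / 2) / (Q * κ * (1 + t)) * ‖A i j‖ := by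
        gcongr
        nlinarith [mul_le_mul_of_nonneg_left hNd hC0.le]
    _ = C * (N : ℝ) ^ (dstar / 2) / (κ ^ (dstar / (2 * β) + 1) * (1 + t)) * ‖A i j‖ := by
        rw [hκe]
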